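/- For a > 0 and y ∈ ℝ, the sum Σ_{t∈ℤ} e^{−a²t²} e^{iyt} is real, positive, and attains its maximum over y at y = 0 (modulo 2π); more precisely it equals Σ_{t∈ℤ} e^{−a²t²} cos(yt), which is maximized when y ≡ 0 (mod 2π). -/

import Mathlib

open Complex

lemma aux_summable {B : ℝ} (hB : 0 < B) (d : ℝ) :
    Summable (fun n : ℤ => Real.exp (-B * ((n : ℝ) + d) ^ 2)) := by
  rw [← Complex.summable_ofReal]
  have h : Summable (jacobiTheta₂_term · (I * B * d / (Real.pi : ℂ)) (I * B / (Real.pi : ℂ))) :=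
    (summable_jacobiTheta₂_term_iff _ _).mpr (by
      have h1 : I * (B : ℂ) / (Real.pi : ℂ) = ((B / Real.pi : ℝ) : ℂ) * I := by push_cast; ring
      rw [h1]
      simpa using div_pos hB Real.pi_pos)
  have := h.mul_left (cexp (-(B : ℂ) * d ^ 2))
  refine this.congr fun n => ?_
  rw [jacobiTheta₂_term, ← Complex.exp_add, Complex.ofReal_exp]
  congr 1
  push_cast
  have hπ : (Real.pi : ℂ) ≠ 0 := by exact_mod_cast Real.pi_ne_zero
  field_simp
  ring_nf
  rw [I_sq]
  ring

/-- Σ_{t∈ℤ} e^{−a²t²} e^{iyt} is real and positive, equals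
Σ_t e^{−a²t²} cos(yt), which is maximized exactly when y ≡ 0 (mod 2π). -/
theorem gaussian_theta_sum (a : ℝ) (ha : 0 < a) (y : ℝ) :
    (∑' t : ℤ, Complex.exp (((-(a ^ 2) * (t : ℝ) ^ 2 : ℝ) : ℂ) + (((y * t : ℝ)) : ℂ) * I))
      = ((∑' t : ℤ, Real.exp (-(a ^ 2) * (t : ℝ) ^ 2) * Real.cos (y * t) : ℝ) : ℂ)
    ∧ 0 < ∑' t : ℤ, Real.exp (-(a ^ 2) * (t : ℝ) ^ 2) * Real.cos (y * t)
    ∧ (∑' t : ℤ, Real.exp (-(a ^ 2) * (t : ℝ) ^ 2) * Real.cos (y * t))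
        ≤ ∑' t : ℤ, Real.exp (-(a ^ 2) * (t : ℝ) ^ 2)
    ∧ ((∑' t : ℤ, Real.exp (-(a ^ 2) * (t : ℝ) ^ 2) * Real.cos (y * t))
          = (∑' t : ℤ, Real.exp (-(a ^ 2) * (t : ℝ) ^ 2))
        ↔ ∃ k : ℤ, y = 2 * Real.pi * k) := by
  have hπ := Real.pi_pos
  have hπc : (Real.pi : ℂ) ≠ 0 := by exact_mod_cast Real.pi_ne_zero
  have ha2 : (0:ℝ) < a ^ 2 := by positivity
  -- summability of f
  have hfs : Summable (fun t : ℤ => Real.exp (-(a ^ 2) * (t : ℝ) ^ 2)) := by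
    refine (aux_summable ha2 0).congr fun n => ?_
    norm_num
  -- summability of g
  have hgabs : Summable fun t : ℤ => |Real.exp (-(a ^ 2) * (t : ℝ) ^ 2) * Real.cos (y * t)| := by
    refine Summable.of_nonneg_of_le (fun t => abs_nonneg _) (fun t => ?_) hfs
    rw [abs_mul, abs_of_pos (Real.exp_pos _)]
    have := Real.abs_cos_le_one (y * t)
    nlinarith [Real.exp_pos (-(a ^ 2) * (t:ℝ) ^ 2)]
  have hgs : Summable fun t : ℤ => Real.exp (-(a ^ 2) * (t : ℝ) ^ 2) * Real.cos (y * t) :=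
    hgabs.of_abs
  -- summability of F
  have hFs : Summable (fun t : ℤ =>
      Complex.exp (((-(a ^ 2) * (t : ℝ) ^ 2 : ℝ) : ℂ) + (((y * t : ℝ)) : ℂ) * I)) := by
    refine Summable.of_norm (hfs.congr fun t => ?_)
    rw [Complex.norm_exp]
    congr 1
    simp only [Complex.add_re, Complex.mul_I_re, ← Complex.ofReal_pow, ← Complex.ofReal_mul,
      ← Complex.ofReal_neg, Complex.ofReal_re, Complex.ofReal_im]
    ring
  -- Poisson summation
  have hBpos : (0:ℝ) < Real.pi ^ 2 / a ^ 2 := by positivity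
  have hTs : Summable fun n : ℤ =>
      Real.exp (-(Real.pi ^ 2 / a ^ 2) * ((n : ℝ) + -(y / (2 * Real.pi))) ^ 2) :=
    aux_summable hBpos _
  have hTpos : 0 < ∑' n : ℤ,
      Real.exp (-(Real.pi ^ 2 / a ^ 2) * ((n : ℝ) + -(y / (2 * Real.pi))) ^ 2) :=
    Summable.tsum_pos hTs (fun n => (Real.exp_pos _).le) 0 (Real.exp_pos _)
  have hcpos : (0:ℝ) < 1 / (a ^ 2 / Real.pi) ^ ((1:ℝ)/2) := by positivity
  have hpoisson : (∑' t : ℤ,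
      Complex.exp (((-(a ^ 2) * (t : ℝ) ^ 2 : ℝ) : ℂ) + (((y * t : ℝ)) : ℂ) * I))
      = (((1 / (a ^ 2 / Real.pi) ^ ((1:ℝ)/2)) * ∑' n : ℤ,
          Real.exp (-(Real.pi ^ 2 / a ^ 2) * ((n : ℝ) + -(y / (2 * Real.pi))) ^ 2) : ℝ) : ℂ) := by
    have key := Complex.tsum_exp_neg_quadratic
      (a := ((a ^ 2 / Real.pi : ℝ) : ℂ)) (by rw [Complex.ofReal_re]; positivity)
      (I * (y / (2 * Real.pi)))
    have hL : (∑' n : ℤ, cexp (-(Real.pi:ℂ) * ((a ^ 2 / Real.pi : ℝ) : ℂ) * (n:ℂ) ^ 2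
        + 2 * (Real.pi:ℂ) * (I * ((y:ℂ) / (2 * (Real.pi:ℂ)))) * (n:ℂ))) = ∑' t : ℤ,
        Complex.exp (((-(a ^ 2) * (t : ℝ) ^ 2 : ℝ) : ℂ) + (((y * t : ℝ)) : ℂ) * I) := by
      refine tsum_congr fun n => ?_
      congr 1
      push_cast
      field_simp
    have hR : (∑' n : ℤ, cexp (-(Real.pi:ℂ) / ((a ^ 2 / Real.pi : ℝ) : ℂ)
        * ((n:ℂ) + I * (I * ((y:ℂ) / (2 * (Real.pi:ℂ))))) ^ 2))
        = (((∑' n : ℤ, Real.exp (-(Real.pi ^ 2 / a ^ 2) * ((n : ℝ) + -(y / (2 * Real.pi))) ^ 2)) : ℝ) : ℂ) := by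
      rw [Complex.ofReal_tsum]
      refine tsum_congr fun n => ?_
      rw [Complex.ofReal_exp]
      congr 1
      have ha0 : (a:ℂ) ≠ 0 := by exact_mod_cast ha.ne'
      push_cast
      field_simp
      ring_nf
      simp only [I_sq, Complex.I_pow_four]
      ring_nf
    have hcoef : (1:ℂ) / ((a ^ 2 / Real.pi : ℝ) : ℂ) ^ ((1:ℂ)/2)
        = (((1 / (a ^ 2 / Real.pi) ^ ((1:ℝ)/2)) : ℝ) : ℂ) := by
      have h12 : ((1:ℂ)/2) = (((1:ℝ)/2 : ℝ) : ℂ) := by norm_num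
      rw [h12, ← Complex.ofReal_cpow (by positivity)]
      push_cast
      ring
    rw [hL, hR, hcoef] at key
    rw [key, ← Complex.ofReal_mul]
  -- real part
  have hre : (∑' t : ℤ, Real.exp (-(a ^ 2) * (t : ℝ) ^ 2) * Real.cos (y * t))
      = (∑' t : ℤ,
        Complex.exp (((-(a ^ 2) * (t : ℝ) ^ 2 : ℝ) : ℂ) + (((y * t : ℝ)) : ℂ) * I)).re := by
    rw [Complex.re_tsum hFs]
    refine tsum_congr fun t => ?_
    rw [Complex.exp_add, ← Complex.ofReal_exp, Complex.re_ofReal_mul,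
      Complex.exp_ofReal_mul_I_re]
  have hSval : (∑' t : ℤ, Real.exp (-(a ^ 2) * (t : ℝ) ^ 2) * Real.cos (y * t))
      = (1 / (a ^ 2 / Real.pi) ^ ((1:ℝ)/2)) * ∑' n : ℤ,
        Real.exp (-(Real.pi ^ 2 / a ^ 2) * ((n : ℝ) + -(y / (2 * Real.pi))) ^ 2) := by
    rw [hre, hpoisson, Complex.ofReal_re]
  refine ⟨?_, ?_, ?_, ?_⟩
  · rw [hpoisson, hSval]
  · rw [hSval]; exact mul_pos hcpos hTpos
  · exact Summable.tsum_le_tsum (fun t => by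
      have h1 := Real.cos_le_one (y * t)
      nlinarith [Real.exp_pos (-(a ^ 2) * (t:ℝ) ^ 2)]) hgs hfs
  · constructor
    · intro heq
      by_contra hk
      push_neg at hk
      have hcos1 : Real.cos y < 1 := by
        rcases lt_or_eq_of_le (Real.cos_le_one y) with h | h
        · exact h
        · exfalso
          obtain ⟨n, hn⟩ := (Real.cos_eq_one_iff y).mp h
          exact hk n (by linarith [hn])
      have hhs : Summable fun t : ℤ =>
          Real.exp (-(a ^ 2) * (t : ℝ) ^ 2) - Real.exp (-(a ^ 2) * (t : ℝ) ^ 2) * Real.cos (y * t) :=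
        hfs.sub hgs
      have hhnn : ∀ t : ℤ, 0 ≤
          Real.exp (-(a ^ 2) * (t : ℝ) ^ 2) - Real.exp (-(a ^ 2) * (t : ℝ) ^ 2) * Real.cos (y * t) :=
        fun t => by
          have h1 := Real.cos_le_one (y * t)
          nlinarith [Real.exp_pos (-(a ^ 2) * (t:ℝ) ^ 2)]
      have hsum : (∑' t : ℤ,
          (Real.exp (-(a ^ 2) * (t : ℝ) ^ 2) - Real.exp (-(a ^ 2) * (t : ℝ) ^ 2) * Real.cos (y * t)))
          = 0 := by
        rw [Summable.tsum_sub hfs hgs, heq]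
        ring
      have hpos1 : 0 < Real.exp (-(a ^ 2) * ((1:ℤ) : ℝ) ^ 2)
          - Real.exp (-(a ^ 2) * ((1:ℤ) : ℝ) ^ 2) * Real.cos (y * ((1:ℤ):ℝ)) := by
        push_cast
        simp only [mul_one, one_pow]
        nlinarith [Real.exp_pos (-(a ^ 2))]
      have hle := Summable.le_tsum hhs 1 (fun j _ => hhnn j)
      rw [hsum] at hle
      linarith
    · rintro ⟨k, rfl⟩
      refine tsum_congr fun t => ?_
      have h2 : (2 * Real.pi * k) * t = (k * t : ℤ) * (2 * Real.pi) := by push_cast; ring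
      rw [h2, Real.cos_int_mul_two_pi, mul_one]
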